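/- For every integer n ≥ 0 there exists a constant C ≥ 1 depending only on n such that for every nonempty index set J, the underlying set of the (n+1)-skeleton Σ^{(n+1)}(J) of the full complex Σ(J), equipped with the ℓ₂-metric, is C-quasiconvex: any two of its points x, y can be joined by a continuous curve in |Σ^{(n+1)}(J)| of length at most C·‖x − y‖. -/

import Mathlib

open Set Metric Filter MeasureTheory
open scoped ENNReal NNReal

noncomputable section

/-- The real Hilbert space `ℓ₂(I)`. -/
abbrev L2 (I : Type*) := lp (fun _ : I => ℝ) 2

/-- The standard unit vector `e_i ∈ ℓ₂(I)`. -/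
noncomputable def stdVec {I : Type*} (i : I) : L2 I :=
  letI := Classical.decEq I; lp.single 2 i 1

/-- The (closed) face of the full complex `Σ(I)` spanned by the vertices `e_i`, `i ∈ s`:
the convex hull of the corresponding standard unit vectors. -/
def faceSet {I : Type*} (s : Finset I) : Set (L2 I) := convexHull ℝ (stdVec '' (s : Set I))

/-- `x` lies in the relative interior of the face spanned by `s`. -/
def memRelInt {I : Type*} (s : Finset I) (x : L2 I) : Prop :=
  x ∈ faceSet s ∧ ∀ i ∈ s, 0 < x i

/-- A subcomplex of the full complex `Σ(I)`, encoded by the collection of the vertex sets of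
its faces: a nonempty collection of finite nonempty subsets of `I`, closed under passing to
nonempty subsets. -/
structure IsSubcomplex {I : Type*} (F : Set (Finset I)) : Prop where
  nonempty : F.Nonempty
  faces_nonempty : ∀ s ∈ F, s.Nonempty
  down_closed : ∀ s ∈ F, ∀ t : Finset I, t.Nonempty → t ⊆ s → t ∈ F

/-- The underlying set `|Σ| ⊆ ℓ₂(I)` of a (sub)complex: the union of its faces. -/
def cpxCarrier {I : Type*} (F : Set (Finset I)) : Set (L2 I) := ⋃ s ∈ F, faceSet s

/-- The open star of the face with vertex set `s` in the complex `F`: the union of the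
relative interiors of all faces of `F` containing it. -/
def openStar {I : Type*} (F : Set (Finset I)) (s : Finset I) : Set (L2 I) :=
  ⋃ t ∈ F, ⋃ (_ : s ⊆ t), {x | memRelInt t x}

/-- The smallest subcomplex of `F` whose underlying set contains `A`
(encoded by its collection of faces). -/
def hullFaces {I : Type*} (F : Set (Finset I)) (A : Set (L2 I)) : Set (Finset I) :=
  ⋂₀ {G : Set (Finset I) | G ⊆ F ∧ IsSubcomplex G ∧ A ⊆ cpxCarrier G}

/-- The pointwise (lower) Lipschitz constant at `x` of the restriction of `f` to `S`:
`liminf_{s → 0+} s⁻¹ · sup { d(f x, f y) : y ∈ S, d(x,y) < s }`, valued in `ℝ≥0∞`. -/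
noncomputable def lipWithin {X Y : Type*} [PseudoMetricSpace X] [PseudoMetricSpace Y]
    (f : X → Y) (S : Set X) (x : X) : ℝ≥0∞ :=
  Filter.liminf
    (fun s : ℝ => (⨆ y ∈ S ∩ Metric.ball x s, edist (f x) (f y)) / ENNReal.ofReal s)
    (nhdsWithin 0 (Set.Ioi 0))

/-- The pointwise (lower) Lipschitz constant `lip f (x)`, valued in `ℝ≥0∞`. -/
noncomputable def plip {X Y : Type*} [PseudoMetricSpace X] [PseudoMetricSpace Y]
    (f : X → Y) (x : X) : ℝ≥0∞ := lipWithin f Set.univ x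

/-- A subset `S` of a metric space is `c`-quasiconvex: any two of its points are joined by a
continuous curve in `S` of length (total variation) at most `c` times their distance. -/
def QuasiconvexSet {X : Type*} [PseudoMetricSpace X] (S : Set X) (c : ℝ) : Prop :=
  ∀ x ∈ S, ∀ y ∈ S, ∃ γ : ℝ → X, ContinuousOn γ (Set.Icc 0 1) ∧
    Set.MapsTo γ (Set.Icc 0 1) S ∧ γ 0 = x ∧ γ 1 = y ∧
    eVariationOn γ (Set.Icc 0 1) ≤ ENNReal.ofReal (c * dist x y)

/-- The intrinsic (length) metric of `S`: the infimal length of continuous curves in `S`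
joining `x` and `y`, valued in `ℝ≥0∞` (with `inf ∅ = ∞`). -/
noncomputable def intrinsicDist {X : Type*} [PseudoMetricSpace X] (S : Set X) (x y : X) : ℝ≥0∞ :=
  ⨅ (γ : ℝ → X) (_ : ContinuousOn γ (Set.Icc 0 1) ∧ Set.MapsTo γ (Set.Icc 0 1) S ∧
      γ 0 = x ∧ γ 1 = y),
    eVariationOn γ (Set.Icc 0 1)

/-- `X` has Nagata dimension `≤ n` with constant `c`: for every `s > 0` there is a covering of
`X` by sets of diameter `≤ c·s` such that every set of diameter `≤ s` meets at most `n + 1`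
members of the covering. -/
def NagataDimLE (X : Type*) [PseudoMetricSpace X] (n : ℕ) (c : ℝ) : Prop :=
  ∀ s : ℝ, 0 < s → ∃ B : Set (Set X),
    (∀ x : X, ∃ b ∈ B, x ∈ b) ∧
    (∀ b ∈ B, EMetric.diam b ≤ ENNReal.ofReal (c * s)) ∧
    (∀ A : Set X, EMetric.diam A ≤ ENNReal.ofReal s →
      {b | b ∈ B ∧ (b ∩ A).Nonempty}.encard ≤ (n : ℕ∞) + 1)

/-- `Y` is Lipschitz `k`-connected with constant `lam`: for `0 ≤ m ≤ k`, every `L`-Lipschitz map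
from the unit sphere `S^m ⊆ ℝ^{m+1}` to `Y` extends to a `lam·L`-Lipschitz map on the closed
unit ball `B^{m+1}`. -/
def LipschitzConnectedWith (Y : Type*) [PseudoMetricSpace Y] (k : ℕ) (lam : ℝ) : Prop :=
  ∀ m : ℕ, m ≤ k → ∀ L : ℝ, 0 < L →
    ∀ f : EuclideanSpace ℝ (Fin (m + 1)) → Y,
      LipschitzOnWith (Real.toNNReal L) f (Metric.sphere 0 1) →
      ∃ g : EuclideanSpace ℝ (Fin (m + 1)) → Y,
        LipschitzOnWith (Real.toNNReal (lam * L)) g (Metric.closedBall 0 1) ∧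
        Set.EqOn f g (Metric.sphere 0 1)

end

universe u

section AuxProof
variable {J : Type*}

lemma stdVec_apply_self (i : J) : (stdVec i : ∀ _ : J, ℝ) i = 1 := by
  rw [stdVec]; letI := Classical.decEq J; exact lp.single_apply_self _ _ _

lemma stdVec_apply_ne {i j : J} (h : j ≠ i) : (stdVec i : ∀ _ : J, ℝ) j = 0 := by
  rw [stdVec]; letI := Classical.decEq J; exact lp.single_apply_ne _ _ _ h

lemma norm_sq_eq (u : Finset J) (z : L2 J) (hz : ∀ i ∉ u, (z : ∀ _ : J, ℝ) i = 0) :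
    ‖z‖^2 = ∑ i ∈ u, ((z : ∀ _ : J, ℝ) i)^2 := by
  rw [← real_inner_self_eq_norm_sq]
  have h1 : (inner ℝ z z : ℝ) = ∑' i, (z : ∀ _ : J, ℝ) i * (z : ∀ _ : J, ℝ) i := by
    rw [lp.inner_eq_tsum]
    rfl
  rw [h1, tsum_eq_sum (s := u) (fun i hi => by rw [hz i hi, zero_mul])]
  exact Finset.sum_congr rfl fun i _ => (sq _).symm


lemma stdVec_apply [DecidableEq J] (i j : J) :
    (stdVec i : ∀ _ : J, ℝ) j = if j = i then 1 else 0 := by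
  by_cases h : j = i
  · subst h; rw [stdVec_apply_self, if_pos rfl]
  · rw [stdVec_apply_ne h, if_neg h]


lemma coe_smul_stdVec (c : ℝ) (i j : J) [DecidableEq J] :
    ((c • stdVec i : L2 J) : ∀ _ : J, ℝ) j = if j = i then c else 0 := by
  rw [lp.coeFn_smul, Pi.smul_apply, stdVec_apply, smul_eq_mul]
  by_cases h : j = i <;> simp [h]

lemma mem_faceSet_iff {s : Finset J} (hs : s.Nonempty) {x : L2 J} :
    x ∈ faceSet s ↔ (∀ i, 0 ≤ (x : ∀ _ : J, ℝ) i) ∧ (∀ i ∉ s, (x : ∀ _ : J, ℝ) i = 0)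
      ∧ ∑ i ∈ s, (x : ∀ _ : J, ℝ) i = 1 := by
  classical
  constructor
  · intro hx
    have hsub : stdVec '' (s : Set J) ⊆
        {z : L2 J | (∀ i, 0 ≤ (z : ∀ _ : J, ℝ) i) ∧ (∀ i ∉ s, (z : ∀ _ : J, ℝ) i = 0)
          ∧ ∑ i ∈ s, (z : ∀ _ : J, ℝ) i = 1} := by
      rintro _ ⟨i, hi, rfl⟩
      refine ⟨fun j => ?_, fun j hj => ?_, ?_⟩
      · rw [stdVec_apply]; positivity
      · refine stdVec_apply_ne fun h => hj ?_
        subst h; exact hi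
      · rw [Finset.sum_congr rfl (fun j _ => stdVec_apply i j), Finset.sum_ite_eq' s i]
        exact if_pos (Finset.mem_coe.mp hi)
    have hconv : Convex ℝ {z : L2 J | (∀ i, 0 ≤ (z : ∀ _ : J, ℝ) i)
        ∧ (∀ i ∉ s, (z : ∀ _ : J, ℝ) i = 0) ∧ ∑ i ∈ s, (z : ∀ _ : J, ℝ) i = 1} := by
      rintro z hz w hw a b ha hb hab
      have key : ∀ j, ((a • z + b • w : L2 J) : ∀ _ : J, ℝ) j
          = a * (z : ∀ _ : J, ℝ) j + b * (w : ∀ _ : J, ℝ) j := by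
        intro j
        rw [lp.coeFn_add, lp.coeFn_smul, lp.coeFn_smul]
        rfl
      refine ⟨fun j => ?_, fun j hj => ?_, ?_⟩
      · rw [key]; have := hz.1 j; have := hw.1 j; positivity
      · rw [key, hz.2.1 j hj, hw.2.1 j hj]; ring
      · rw [Finset.sum_congr rfl fun j _ => key j, Finset.sum_add_distrib,
          ← Finset.mul_sum, ← Finset.mul_sum, hz.2.2, hw.2.2]
        linarith
    exact convexHull_min hsub hconv hx
  · rintro ⟨h0, hout, hsum⟩
    have hx : x = ∑ i ∈ s, ((x : ∀ _ : J, ℝ) i) • stdVec i := by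
      apply lp.ext
      funext j
      symm
      rw [lp.coeFn_sum, Finset.sum_apply,
        Finset.sum_congr rfl (fun i _ => coe_smul_stdVec ((x : ∀ _ : J, ℝ) i) i j),
        Finset.sum_ite_eq s j]
      by_cases h : j ∈ s
      · simp [h]
      · simp [h, hout j h]
    have hmem := Finset.centerMass_mem_convexHull (R := ℝ) s
      (w := fun i => (x : ∀ _ : J, ℝ) i) (z := fun i => stdVec i)
      (fun i _ => h0 i) (by rw [hsum]; norm_num)
      (fun i hi => Set.mem_image_of_mem _ hi)
    rw [Finset.centerMass_eq_of_sum_1 _ _ hsum] at hmem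
    rw [show faceSet s = convexHull ℝ (stdVec '' (s : Set J)) from rfl]
    rw [hx]
    exact hmem

section Curves
variable {E : Type*} [NormedAddCommGroup E] [NormedSpace ℝ E]

lemma evar_line (p v : E) (c d a b : ℝ) (hab : a ≤ b) :
    eVariationOn (fun t : ℝ => p + (c*t + d) • v) (Icc a b)
      ≤ ENNReal.ofReal (|c| * ‖v‖ * (b - a)) := by
  have hf : LipschitzOnWith (Real.toNNReal (|c| * ‖v‖))
      (fun t : ℝ => p + (c*t + d) • v) univ := by
    apply LipschitzOnWith.of_dist_le_mul
    intro s _ t _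
    have h1 : (p + (c*s+d)•v) - (p + (c*t+d)•v) = (c*(s-t))•v := by
      module
    rw [dist_eq_norm, h1, norm_smul, Real.coe_toNNReal _ (by positivity), Real.dist_eq,
      Real.norm_eq_abs, abs_mul]
    ring_nf
    rfl
  have hid : eVariationOn (id : ℝ → ℝ) (Icc a b) ≤ ENNReal.ofReal (b - a) := by
    have h := MonotoneOn.eVariationOn_le (f := (id : ℝ → ℝ)) (s := Icc a b)
      (monotoneOn_id) (left_mem_Icc.2 hab) (right_mem_Icc.2 hab)
    simpa using h
  calc eVariationOn (fun t : ℝ => p + (c*t + d) • v) (Icc a b)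
      = eVariationOn ((fun t : ℝ => p + (c*t + d) • v) ∘ (id : ℝ → ℝ)) (Icc a b) := rfl
    _ ≤ (Real.toNNReal (|c| * ‖v‖)) * eVariationOn (id : ℝ → ℝ) (Icc a b) :=
        hf.comp_eVariationOn_le (mapsTo_univ _ _)
    _ ≤ (Real.toNNReal (|c| * ‖v‖)) * ENNReal.ofReal (b - a) := by
        exact mul_le_mul_right hid _
    _ = ENNReal.ofReal (|c| * ‖v‖ * (b - a)) := by
        rw [ENNReal.ofReal_mul (by positivity)]
        rfl

lemma exists_pl3 {S : Set E} (p0 p1 p2 p3 : E) (F1 F2 F3 : Set E)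
    (h1 : Convex ℝ F1) (h2 : Convex ℝ F2) (h3 : Convex ℝ F3)
    (hF1 : F1 ⊆ S) (hF2 : F2 ⊆ S) (hF3 : F3 ⊆ S)
    (h01 : p0 ∈ F1) (h11 : p1 ∈ F1) (h12 : p1 ∈ F2) (h22 : p2 ∈ F2)
    (h23 : p2 ∈ F3) (h33 : p3 ∈ F3) :
    ∃ γ : ℝ → E, ContinuousOn γ (Icc 0 1) ∧ MapsTo γ (Icc 0 1) S ∧ γ 0 = p0 ∧ γ 1 = p3 ∧
      eVariationOn γ (Icc 0 1) ≤ ENNReal.ofReal (dist p0 p1 + dist p1 p2 + dist p2 p3) := by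
  classical
  set A1 : ℝ → E := fun t => p0 + (3*t + 0) • (p1 - p0) with hA1
  set A2 : ℝ → E := fun t => p1 + (3*t + (-1)) • (p2 - p1) with hA2
  set A3 : ℝ → E := fun t => p2 + (3*t + (-2)) • (p3 - p2) with hA3
  set γ : ℝ → E := fun t => if t ≤ 1/3 then A1 t else if t ≤ 2/3 then A2 t else A3 t with hγ
  have contA1 : Continuous A1 := by fun_prop
  have contA2 : Continuous A2 := by fun_prop
  have contA3 : Continuous A3 := by fun_prop
  have cont : Continuous γ := by
    apply Continuous.if_le _ _ continuous_id continuous_const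
    · intro t ht
      have ht' : t = 1/3 := ht
      subst ht'
      rw [if_pos (by norm_num : (1/3:ℝ) ≤ 2/3), hA1, hA2]
      norm_num
    · exact contA1
    · apply Continuous.if_le contA2 contA3 continuous_id continuous_const
      intro t ht
      have ht' : t = 2/3 := ht
      subst ht'
      rw [hA2, hA3]
      norm_num
  have seg : ∀ (p q : E) (F : Set E), Convex ℝ F → p ∈ F → q ∈ F →
      ∀ u : ℝ, 0 ≤ u → u ≤ 1 → p + u • (q - p) ∈ F := by
    intro p q F hF hp hq u hu0 hu1
    have : p + u • (q - p) = (1 - u) • p + u • q := by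
      rw [smul_sub, sub_smul, one_smul]; abel
    rw [this]
    exact hF hp hq (by linarith) hu0 (by ring)
  have maps : MapsTo γ (Icc 0 1) S := by
    intro t ht
    obtain ⟨ht0, ht1⟩ := ht
    rw [hγ]
    dsimp only
    split_ifs with hc1 hc2
    · exact hF1 (seg _ _ _ h1 h01 h11 _ (by linarith) (by linarith))
    · exact hF2 (seg _ _ _ h2 h12 h22 _ (by push_neg at hc1; linarith) (by linarith))
    · exact hF3 (seg _ _ _ h3 h23 h33 _ (by push_neg at hc2; linarith) (by linarith))
  have e1 : eVariationOn γ (Icc 0 (1/3)) ≤ ENNReal.ofReal (dist p0 p1) := by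
    have heq : EqOn γ A1 (Icc 0 (1/3)) := by
      intro t ht
      rw [hγ]; dsimp only; rw [if_pos ht.2]
    rw [eVariationOn.eq_of_eqOn heq]
    have hv := evar_line p0 (p1 - p0) 3 0 0 (1/3) (by norm_num)
    refine hv.trans_eq ?_
    have hd : |(3:ℝ)| * ‖p1 - p0‖ * ((1:ℝ)/3 - 0) = dist p0 p1 := by
      rw [dist_eq_norm, norm_sub_rev p0 p1, abs_of_nonneg (by norm_num : (0:ℝ) ≤ 3)]
      ring
    rw [hd]
  have e2 : eVariationOn γ (Icc (1/3) (2/3)) ≤ ENNReal.ofReal (dist p1 p2) := by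
    have heq : EqOn γ A2 (Icc (1/3) (2/3)) := by
      intro t ht
      rw [hγ]; dsimp only
      by_cases hc : t ≤ 1/3
      · have : t = 1/3 := le_antisymm hc ht.1
        subst this
        rw [if_pos le_rfl, hA1, hA2]
        norm_num
      · rw [if_neg hc, if_pos ht.2]
    rw [eVariationOn.eq_of_eqOn heq]
    have hv := evar_line p1 (p2 - p1) 3 (-1) (1/3) (2/3) (by norm_num)
    refine hv.trans_eq ?_
    have hd : |(3:ℝ)| * ‖p2 - p1‖ * ((2:ℝ)/3 - 1/3) = dist p1 p2 := by
      rw [dist_eq_norm, norm_sub_rev p1 p2, abs_of_nonneg (by norm_num : (0:ℝ) ≤ 3)]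
      ring
    rw [hd]
  have e3 : eVariationOn γ (Icc (2/3) 1) ≤ ENNReal.ofReal (dist p2 p3) := by
    have heq : EqOn γ A3 (Icc (2/3) 1) := by
      intro t ht
      rw [hγ]; dsimp only
      rw [if_neg (by linarith [ht.1] : ¬ t ≤ 1/3)]
      by_cases hc : t ≤ 2/3
      · have : t = 2/3 := le_antisymm hc ht.1
        subst this
        rw [if_pos le_rfl, hA2, hA3]
        norm_num
      · rw [if_neg hc]
    rw [eVariationOn.eq_of_eqOn heq]
    have hv := evar_line p2 (p3 - p2) 3 (-2) (2/3) 1 (by norm_num)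
    refine hv.trans_eq ?_
    have hd : |(3:ℝ)| * ‖p3 - p2‖ * ((1:ℝ) - 2/3) = dist p2 p3 := by
      rw [dist_eq_norm, norm_sub_rev p2 p3, abs_of_nonneg (by norm_num : (0:ℝ) ≤ 3)]
      ring
    rw [hd]
  have esplit : eVariationOn γ (Icc 0 1)
      ≤ ENNReal.ofReal (dist p0 p1 + dist p1 p2 + dist p2 p3) := by
    have hs1 := eVariationOn.Icc_add_Icc γ (s := (univ : Set ℝ))
      (by norm_num : (0:ℝ) ≤ 1/3) (by norm_num : (1/3:ℝ) ≤ 1) (mem_univ _)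
    have hs2 := eVariationOn.Icc_add_Icc γ (s := (univ : Set ℝ))
      (by norm_num : (1/3:ℝ) ≤ 2/3) (by norm_num : (2/3:ℝ) ≤ 1) (mem_univ _)
    simp only [univ_inter] at hs1 hs2
    calc eVariationOn γ (Icc (0:ℝ) 1)
        = eVariationOn γ (Icc (0:ℝ) (1/3)) +
          (eVariationOn γ (Icc (1/3:ℝ) (2/3)) + eVariationOn γ (Icc (2/3:ℝ) 1)) := by
          rw [hs2, hs1]
      _ ≤ ENNReal.ofReal (dist p0 p1) +
          (ENNReal.ofReal (dist p1 p2) + ENNReal.ofReal (dist p2 p3)) :=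
          add_le_add e1 (add_le_add e2 e3)
      _ = ENNReal.ofReal (dist p0 p1 + dist p1 p2 + dist p2 p3) := by
          rw [← ENNReal.ofReal_add dist_nonneg dist_nonneg,
            ← ENNReal.ofReal_add dist_nonneg (add_nonneg dist_nonneg dist_nonneg), add_assoc]
  refine ⟨γ, cont.continuousOn, maps, ?_, ?_, esplit⟩
  · show γ 0 = p0
    rw [hγ]; dsimp only
    rw [if_pos (by norm_num : (0:ℝ) ≤ 1/3), hA1]
    norm_num
  · show γ 1 = p3
    rw [hγ]; dsimp only
    rw [if_neg (by norm_num : ¬ (1:ℝ) ≤ 1/3), if_neg (by norm_num : ¬ (1:ℝ) ≤ 2/3), hA3]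
    norm_num

end Curves

section MainAux
variable {J : Type*}

lemma le_of_sq_le_sq' {a b : ℝ} (ha : 0 ≤ a) (hb : 0 ≤ b) (h : a^2 ≤ b^2) : a ≤ b := by
  nlinarith [sq_nonneg (a - b), sq_nonneg (a + b)]

lemma coords_of_comb [DecidableEq J] (r : Finset J) (c : J → ℝ) (j : J) :
    ((∑ i ∈ r, c i • stdVec i : L2 J) : ∀ _ : J, ℝ) j = if j ∈ r then c j else 0 := by
  rw [lp.coeFn_sum, Finset.sum_apply,
    Finset.sum_congr rfl (fun i _ => coe_smul_stdVec (c i) i j), Finset.sum_ite_eq r j]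

lemma faceSet_mono {r s : Finset J} (h : r ⊆ s) : faceSet r ⊆ faceSet s :=
  convexHull_mono (Set.image_mono (by exact_mod_cast h))

lemma sum_sq_le_one {s : Finset J} {x : L2 J} (h0 : ∀ i, 0 ≤ (x : ∀ _ : J, ℝ) i)
    (hsum : ∑ i ∈ s, (x : ∀ _ : J, ℝ) i = 1) :
    ∑ i ∈ s, ((x : ∀ _ : J, ℝ) i)^2 ≤ 1 := by
  have := Finset.sum_sq_le_sq_sum_of_nonneg (f := fun i => (x : ∀ _ : J, ℝ) i) (s := s)
    (fun i _ => h0 i)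
  rw [hsum] at this
  simpa using this

lemma norm_sub_sq_eq (u : Finset J) (x y : L2 J)
    (hx : ∀ i ∉ u, (x : ∀ _ : J, ℝ) i = 0) (hy : ∀ i ∉ u, (y : ∀ _ : J, ℝ) i = 0) :
    ‖x - y‖^2 = ∑ i ∈ u, ((x : ∀ _ : J, ℝ) i - (y : ∀ _ : J, ℝ) i)^2 := by
  rw [norm_sq_eq u (x - y) (fun i hi => by rw [lp.coeFn_sub, Pi.sub_apply, hx i hi, hy i hi,
    sub_zero])]
  exact Finset.sum_congr rfl fun i _ => by rw [lp.coeFn_sub, Pi.sub_apply]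

lemma dist_sq_le_two {s t : Finset J} (hs : s.Nonempty) (ht : t.Nonempty) {x y : L2 J}
    (hx : x ∈ faceSet s) (hy : y ∈ faceSet t) : ‖x - y‖^2 ≤ 2 := by
  classical
  obtain ⟨hx0, hxs, hxsum⟩ := (mem_faceSet_iff hs).1 hx
  obtain ⟨hy0, hyt, hysum⟩ := (mem_faceSet_iff ht).1 hy
  have key : ‖x - y‖^2 = ∑ i ∈ s ∪ t, ((x : ∀ _ : J, ℝ) i - (y : ∀ _ : J, ℝ) i)^2 :=
    norm_sub_sq_eq (s ∪ t) x y
      (fun i hi => hxs i (fun h => hi (Finset.mem_union_left _ h)))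
      (fun i hi => hyt i (fun h => hi (Finset.mem_union_right _ h)))
  have h1 : ∑ i ∈ s ∪ t, ((x : ∀ _ : J, ℝ) i - (y : ∀ _ : J, ℝ) i)^2
      ≤ ∑ i ∈ s ∪ t, (((x : ∀ _ : J, ℝ) i)^2 + ((y : ∀ _ : J, ℝ) i)^2) :=
    Finset.sum_le_sum fun i _ => by nlinarith [mul_nonneg (hx0 i) (hy0 i)]
  have h2 : ∑ i ∈ s ∪ t, ((x : ∀ _ : J, ℝ) i)^2 = ∑ i ∈ s, ((x : ∀ _ : J, ℝ) i)^2 :=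
    (Finset.sum_subset Finset.subset_union_left
      (fun i _ hi => by rw [hxs i hi]; ring)).symm
  have h3 : ∑ i ∈ s ∪ t, ((y : ∀ _ : J, ℝ) i)^2 = ∑ i ∈ t, ((y : ∀ _ : J, ℝ) i)^2 :=
    (Finset.sum_subset Finset.subset_union_right
      (fun i _ hi => by rw [hyt i hi]; ring)).symm
  rw [key]
  calc ∑ i ∈ s ∪ t, ((x : ∀ _ : J, ℝ) i - (y : ∀ _ : J, ℝ) i)^2
      ≤ ∑ i ∈ s ∪ t, (((x : ∀ _ : J, ℝ) i)^2 + ((y : ∀ _ : J, ℝ) i)^2) := h1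
    _ = ∑ i ∈ s, ((x : ∀ _ : J, ℝ) i)^2 + ∑ i ∈ t, ((y : ∀ _ : J, ℝ) i)^2 := by
        rw [Finset.sum_add_distrib, h2, h3]
    _ ≤ 1 + 1 := add_le_add (sum_sq_le_one hx0 hxsum) (sum_sq_le_one hy0 hysum)
    _ = 2 := by norm_num

lemma mass_sq_le [DecidableEq J] {s t : Finset J} (hs : s.Nonempty) (ht : t.Nonempty) {x y : L2 J}
    (hx : x ∈ faceSet s) (hy : y ∈ faceSet t) :
    (∑ i ∈ s \ t, (x : ∀ _ : J, ℝ) i)^2 ≤ (s.card : ℝ) * ‖x - y‖^2 := by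
  classical
  obtain ⟨hx0, hxs, hxsum⟩ := (mem_faceSet_iff hs).1 hx
  obtain ⟨hy0, hyt, hysum⟩ := (mem_faceSet_iff ht).1 hy
  have key : ‖x - y‖^2 = ∑ i ∈ s ∪ t, ((x : ∀ _ : J, ℝ) i - (y : ∀ _ : J, ℝ) i)^2 :=
    norm_sub_sq_eq (s ∪ t) x y
      (fun i hi => hxs i (fun h => hi (Finset.mem_union_left _ h)))
      (fun i hi => hyt i (fun h => hi (Finset.mem_union_right _ h)))
  have h1 : (∑ i ∈ s \ t, (x : ∀ _ : J, ℝ) i)^2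
      ≤ ((s \ t).card : ℝ) * ∑ i ∈ s \ t, ((x : ∀ _ : J, ℝ) i)^2 :=
    sq_sum_le_card_mul_sum_sq
  have h2 : ∑ i ∈ s \ t, ((x : ∀ _ : J, ℝ) i)^2
      = ∑ i ∈ s \ t, ((x : ∀ _ : J, ℝ) i - (y : ∀ _ : J, ℝ) i)^2 :=
    Finset.sum_congr rfl fun i hi => by
      rw [hyt i (Finset.mem_sdiff.1 hi).2, sub_zero]
  have h3 : ∑ i ∈ s \ t, ((x : ∀ _ : J, ℝ) i - (y : ∀ _ : J, ℝ) i)^2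
      ≤ ∑ i ∈ s ∪ t, ((x : ∀ _ : J, ℝ) i - (y : ∀ _ : J, ℝ) i)^2 :=
    Finset.sum_le_sum_of_subset_of_nonneg
      (Finset.sdiff_subset.trans Finset.subset_union_left)
      (fun i _ _ => sq_nonneg _)
  have hcard : (((s \ t).card : ℝ)) ≤ (s.card : ℝ) := by
    exact_mod_cast Finset.card_le_card Finset.sdiff_subset
  calc (∑ i ∈ s \ t, (x : ∀ _ : J, ℝ) i)^2
      ≤ ((s \ t).card : ℝ) * ∑ i ∈ s \ t, ((x : ∀ _ : J, ℝ) i)^2 := h1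
    _ ≤ (s.card : ℝ) * ∑ i ∈ s ∪ t, ((x : ∀ _ : J, ℝ) i - (y : ∀ _ : J, ℝ) i)^2 := by
        rw [h2]
        exact mul_le_mul hcard h3 (Finset.sum_nonneg fun i _ => sq_nonneg _)
          (Nat.cast_nonneg _)
    _ = (s.card : ℝ) * ‖x - y‖^2 := by rw [key]

lemma key_approx [DecidableEq J] {s r : Finset J} (hr : r.Nonempty) (hrs : r ⊆ s) {x : L2 J}
    (hx : x ∈ faceSet s) :
    ∃ x' : L2 J, x' ∈ faceSet r ∧
      ‖x - x'‖^2 ≤ 2 * (∑ i ∈ s \ r, (x : ∀ _ : J, ℝ) i)^2 := by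
  classical
  obtain ⟨i0, hi0⟩ := hr
  have hs : s.Nonempty := ⟨i0, hrs hi0⟩
  obtain ⟨hx0, hxs, hxsum⟩ := (mem_faceSet_iff hs).1 hx
  set a : ℝ := ∑ i ∈ s \ r, (x : ∀ _ : J, ℝ) i with ha
  have ha0 : 0 ≤ a := Finset.sum_nonneg fun i _ => hx0 i
  have hsplit : a + ∑ i ∈ r, (x : ∀ _ : J, ℝ) i = 1 := by
    rw [ha, Finset.sum_sdiff hrs, hxsum]
  set x' : L2 J := (∑ i ∈ r, ((x : ∀ _ : J, ℝ) i) • stdVec i) + a • stdVec i0 with hx'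
  have hco : ∀ j, (x' : ∀ _ : J, ℝ) j
      = (if j ∈ r then (x : ∀ _ : J, ℝ) j else 0) + (if j = i0 then a else 0) := by
    intro j
    rw [hx', lp.coeFn_add, Pi.add_apply, coords_of_comb, coe_smul_stdVec]
  have hmem : x' ∈ faceSet r := by
    rw [mem_faceSet_iff ⟨i0, hi0⟩]
    refine ⟨fun j => ?_, fun j hj => ?_, ?_⟩
    · rw [hco]
      split_ifs <;> linarith [hx0 j, ha0]
    · rw [hco, if_neg hj, if_neg (fun h => hj (by rw [h]; exact hi0)), add_zero]
    · rw [Finset.sum_congr rfl fun j _ => hco j, Finset.sum_add_distrib,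
        Finset.sum_ite_eq' r i0, if_pos hi0]
      have : ∑ j ∈ r, (if j ∈ r then (x : ∀ _ : J, ℝ) j else 0)
          = ∑ j ∈ r, (x : ∀ _ : J, ℝ) j :=
        Finset.sum_congr rfl fun j hj => if_pos hj
      rw [this]
      linarith
  refine ⟨x', hmem, ?_⟩
  have hns : ‖x - x'‖^2 = ∑ i ∈ s, ((x : ∀ _ : J, ℝ) i - (x' : ∀ _ : J, ℝ) i)^2 :=
    norm_sub_sq_eq s x x' hxs
      (fun i hi => by
        rw [hco, if_neg (fun h => hi (hrs h)), if_neg (fun h => hi (hrs (by rw [h]; exact hi0))), add_zero])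
  have hsd : ∑ i ∈ s \ r, ((x : ∀ _ : J, ℝ) i - (x' : ∀ _ : J, ℝ) i)^2
      + ∑ i ∈ r, ((x : ∀ _ : J, ℝ) i - (x' : ∀ _ : J, ℝ) i)^2
      = ∑ i ∈ s, ((x : ∀ _ : J, ℝ) i - (x' : ∀ _ : J, ℝ) i)^2 :=
    Finset.sum_sdiff hrs
  have hone : ∑ i ∈ r, ((x : ∀ _ : J, ℝ) i - (x' : ∀ _ : J, ℝ) i)^2 = a^2 := by
    have : ∀ i ∈ r, ((x : ∀ _ : J, ℝ) i - (x' : ∀ _ : J, ℝ) i)^2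
        = (if i = i0 then a^2 else 0) := by
      intro i hi
      rw [hco, if_pos hi]
      split_ifs <;> ring
    rw [Finset.sum_congr rfl this, Finset.sum_ite_eq' r i0, if_pos hi0]
  have htwo : ∑ i ∈ s \ r, ((x : ∀ _ : J, ℝ) i - (x' : ∀ _ : J, ℝ) i)^2 ≤ a^2 := by
    have heq : ∀ i ∈ s \ r, ((x : ∀ _ : J, ℝ) i - (x' : ∀ _ : J, ℝ) i)^2
        = ((x : ∀ _ : J, ℝ) i)^2 := by
      intro i hi
      obtain ⟨his, hir⟩ := Finset.mem_sdiff.1 hi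
      rw [hco, if_neg hir, if_neg (fun h => hir (by rw [h]; exact hi0))]
      ring
    rw [Finset.sum_congr rfl heq]
    have := Finset.sum_sq_le_sq_sum_of_nonneg
      (f := fun i => (x : ∀ _ : J, ℝ) i) (s := s \ r) (fun i _ => hx0 i)
    simpa [← ha] using this
  rw [hns, ← hsd, hone]
  linarith

end MainAux

lemma disjoint_norm_lower [DecidableEq J] {s t : Finset J} (hs : s.Nonempty) (ht : t.Nonempty)
    (hd : s ∩ t = ∅) {x y : L2 J} (hx : x ∈ faceSet s) (hy : y ∈ faceSet t) {N : ℝ}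
    (hNs : (s.card : ℝ) ≤ N) (hNt : (t.card : ℝ) ≤ N) : 2 ≤ N * ‖x - y‖^2 := by
  obtain ⟨hx0, hxs, hxsum⟩ := (mem_faceSet_iff hs).1 hx
  obtain ⟨hy0, hyt, hysum⟩ := (mem_faceSet_iff ht).1 hy
  have hdisj : Disjoint s t := Finset.disjoint_iff_inter_eq_empty.2 hd
  have key : ‖x - y‖^2 = ∑ i ∈ s ∪ t, ((x : ∀ _ : J, ℝ) i - (y : ∀ _ : J, ℝ) i)^2 :=
    norm_sub_sq_eq (s ∪ t) x y
      (fun i hi => hxs i (fun h => hi (Finset.mem_union_left _ h)))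
      (fun i hi => hyt i (fun h => hi (Finset.mem_union_right _ h)))
  have hsplit : ∑ i ∈ s ∪ t, ((x : ∀ _ : J, ℝ) i - (y : ∀ _ : J, ℝ) i)^2
      = ∑ i ∈ s, ((x : ∀ _ : J, ℝ) i - (y : ∀ _ : J, ℝ) i)^2
        + ∑ i ∈ t, ((x : ∀ _ : J, ℝ) i - (y : ∀ _ : J, ℝ) i)^2 :=
    Finset.sum_union hdisj
  have hxt : ∑ i ∈ s, ((x : ∀ _ : J, ℝ) i - (y : ∀ _ : J, ℝ) i)^2
      = ∑ i ∈ s, ((x : ∀ _ : J, ℝ) i)^2 :=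
    Finset.sum_congr rfl fun i hi => by
      rw [hyt i (Finset.disjoint_left.1 hdisj hi), sub_zero]
  have hyt' : ∑ i ∈ t, ((x : ∀ _ : J, ℝ) i - (y : ∀ _ : J, ℝ) i)^2
      = ∑ i ∈ t, ((y : ∀ _ : J, ℝ) i)^2 :=
    Finset.sum_congr rfl fun i hi => by
      rw [hxs i (Finset.disjoint_right.1 hdisj hi)]; ring
  have h1 : 1 ≤ (s.card : ℝ) * ∑ i ∈ s, ((x : ∀ _ : J, ℝ) i)^2 := by
    have := sq_sum_le_card_mul_sum_sq (s := s) (f := fun i => (x : ∀ _ : J, ℝ) i)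
    rw [hxsum] at this
    simpa using this
  have h2 : 1 ≤ (t.card : ℝ) * ∑ i ∈ t, ((y : ∀ _ : J, ℝ) i)^2 := by
    have := sq_sum_le_card_mul_sum_sq (s := t) (f := fun i => (y : ∀ _ : J, ℝ) i)
    rw [hysum] at this
    simpa using this
  have hxnn : 0 ≤ ∑ i ∈ s, ((x : ∀ _ : J, ℝ) i)^2 := Finset.sum_nonneg fun i _ => sq_nonneg _
  have hynn : 0 ≤ ∑ i ∈ t, ((y : ∀ _ : J, ℝ) i)^2 := Finset.sum_nonneg fun i _ => sq_nonneg _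
  rw [key, hsplit, hxt, hyt']
  nlinarith [mul_le_mul_of_nonneg_right hNs hxnn, mul_le_mul_of_nonneg_right hNt hynn]



end AuxProof

set_option maxHeartbeats 1000000 in
/-- For every `n` there is `C = C(n) ≥ 1` such that for every nonempty index
set `J` the underlying set of the `(n+1)`-skeleton of the full complex `Σ(J)` (with the
`ℓ₂`-metric) is `C`-quasiconvex: any two of its points are joined by a continuous curve inside
it of length at most `C` times their distance. -/
theorem stmt_12 (n : ℕ) :
    ∃ C : ℝ, 1 ≤ C ∧
      ∀ (J : Type u), Nonempty J →
        QuasiconvexSet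
          (⋃ (s : Finset J) (_ : s.Nonempty) (_ : s.card ≤ n + 2), faceSet s) C := by
  classical
  refine ⟨20*((n:ℝ)+2), by nlinarith [Nat.cast_nonneg (α := ℝ) n], fun J _ => ?_⟩
  intro x hx y hy
  set N : ℝ := (n:ℝ) + 2 with hN
  have hNn : (0:ℝ) ≤ (n:ℝ) := Nat.cast_nonneg n
  have hN2 : (2:ℝ) ≤ N := by rw [hN]; linarith
  have hN0 : (0:ℝ) ≤ N := by linarith
  simp only [Set.mem_iUnion] at hx hy
  obtain ⟨s, hs, hcs, hxs⟩ := hx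
  obtain ⟨t, ht, hct, hyt⟩ := hy
  have hcsR : (s.card : ℝ) ≤ N := by rw [hN]; exact_mod_cast hcs
  have hctR : (t.card : ℝ) ≤ N := by rw [hN]; exact_mod_cast hct
  set ε : ℝ := ‖x - y‖ with hε
  have hεn : dist x y = ε := dist_eq_norm x y
  have hε0 : 0 ≤ ε := norm_nonneg _
  have hS : ∀ u : Finset J, u.Nonempty → u.card ≤ n + 2 →
      faceSet u ⊆ (⋃ (s : Finset J) (_ : s.Nonempty) (_ : s.card ≤ n + 2), faceSet s) := by
    intro u hu1 hu2 z hz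
    exact Set.mem_iUnion.2 ⟨u, Set.mem_iUnion.2 ⟨hu1, Set.mem_iUnion.2 ⟨hu2, hz⟩⟩⟩
  have hdle : ∀ {u v : Finset J}, u.Nonempty → v.Nonempty → ∀ {z w : L2 J},
      z ∈ faceSet u → w ∈ faceSet v → dist z w ≤ 3/2 := by
    intro u v hu hv z w hz hw
    rw [dist_eq_norm]
    exact le_of_sq_le_sq' (norm_nonneg _) (by norm_num)
      (by nlinarith [dist_sq_le_two hu hv hz hw])
  by_cases hrne : (s ∩ t).Nonempty
  · -- the two faces share a vertex
    obtain ⟨x', hx'm, hx'b⟩ := key_approx hrne Finset.inter_subset_left hxs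
    have hrne' : (t ∩ s).Nonempty := by rwa [Finset.inter_comm]
    obtain ⟨y', hy'm, hy'b⟩ := key_approx hrne' Finset.inter_subset_left hyt
    rw [Finset.sdiff_inter_self_left] at hx'b hy'b
    rw [Finset.inter_comm t s] at hy'm
    have hma : (∑ i ∈ s \ t, (x : ∀ _ : J, ℝ) i)^2 ≤ N * ε^2 := by
      refine le_trans (mass_sq_le hs ht hxs hyt) ?_
      rw [hε]
      exact mul_le_mul_of_nonneg_right hcsR (sq_nonneg _)
    have hmb : (∑ i ∈ t \ s, (y : ∀ _ : J, ℝ) i)^2 ≤ N * ε^2 := by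
      refine le_trans (mass_sq_le ht hs hyt hxs) ?_
      rw [hε, norm_sub_rev]
      exact mul_le_mul_of_nonneg_right hctR (sq_nonneg _)
    set u1 : ℝ := ‖x - x'‖ with hu1d
    set u2 : ℝ := ‖y - y'‖ with hu2d
    have hu10 : 0 ≤ u1 := norm_nonneg _
    have hu20 : 0 ≤ u2 := norm_nonneg _
    have hu1sq : u1^2 ≤ 2*(N*ε^2) := le_trans hx'b (by linarith)
    have hu2sq : u2^2 ≤ 2*(N*ε^2) := le_trans hy'b (by linarith)
    have hu1 : u1 ≤ 4*N*ε := le_of_sq_le_sq' hu10 (by positivity)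
      (by nlinarith [sq_nonneg ε])
    have hu2 : u2 ≤ 4*N*ε := le_of_sq_le_sq' hu20 (by positivity)
      (by nlinarith [sq_nonneg ε])
    obtain ⟨γ, hγc, hγm, hγ0, hγ1, hγv⟩ := exists_pl3 x x' y' y
      (faceSet s) (faceSet (s ∩ t)) (faceSet t)
      (convex_convexHull ℝ _) (convex_convexHull ℝ _) (convex_convexHull ℝ _)
      (hS s hs hcs)
      (hS (s ∩ t) hrne (le_trans (Finset.card_le_card Finset.inter_subset_left) hcs))
      (hS t ht hct)
      hxs (faceSet_mono Finset.inter_subset_left hx'm) hx'm hy'm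
      (faceSet_mono Finset.inter_subset_right hy'm) hyt
    refine ⟨γ, hγc, hγm, hγ0, hγ1, le_trans hγv (ENNReal.ofReal_le_ofReal ?_)⟩
    have hd1 : dist x x' = u1 := dist_eq_norm _ _
    have hd3 : dist y' y = u2 := by rw [dist_eq_norm, norm_sub_rev]
    have hdm : dist x' y' ≤ u1 + ε + u2 := by
      calc dist x' y' ≤ dist x' x + dist x y + dist y y' := dist_triangle4 _ _ _ _
        _ = u1 + ε + u2 := by
            rw [dist_comm x' x, hd1, hεn, dist_comm y y', dist_eq_norm y' y, norm_sub_rev]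
    have hεe : ε ≤ 4*N*ε := by nlinarith [mul_nonneg hε0 (by linarith : (0:ℝ) ≤ 4*N - 1)]
    rw [hεn]
    linarith
  · -- disjoint faces
    have hre : s ∩ t = ∅ := Finset.not_nonempty_iff_eq_empty.1 hrne
    obtain ⟨i0, hi0⟩ := hs
    obtain ⟨j0, hj0⟩ := ht
    have hlow : 2 ≤ N * ε^2 := by
      rw [hε]
      exact disjoint_norm_lower ⟨i0, hi0⟩ ⟨j0, hj0⟩ hre hxs hyt hcsR hctR
    have hed : ε ≤ 3/2 := by
      rw [hε, ← dist_eq_norm]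
      exact hdle ⟨i0, hi0⟩ ⟨j0, hj0⟩ hxs hyt
    have hNe : 4/3 ≤ N*ε := by
      nlinarith [mul_nonneg (mul_nonneg hN0 hε0) (by linarith : (0:ℝ) ≤ 3/2 - ε)]
    have hv1s : stdVec i0 ∈ faceSet s :=
      subset_convexHull ℝ _ (Set.mem_image_of_mem _ (Finset.mem_coe.2 hi0))
    have hv2t : stdVec j0 ∈ faceSet t :=
      subset_convexHull ℝ _ (Set.mem_image_of_mem _ (Finset.mem_coe.2 hj0))
    have hv1e : stdVec i0 ∈ faceSet {i0, j0} :=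
      subset_convexHull ℝ _ (Set.mem_image_of_mem _
        (Finset.mem_coe.2 (Finset.mem_insert_self _ _)))
    have hv2e : stdVec j0 ∈ faceSet {i0, j0} :=
      subset_convexHull ℝ _ (Set.mem_image_of_mem _
        (Finset.mem_coe.2 (Finset.mem_insert_of_mem (Finset.mem_singleton_self _))))
    have hcard2 : ({i0, j0} : Finset J).card ≤ n + 2 := by
      have h1 : ({i0, j0} : Finset J).card ≤ ({j0} : Finset J).card + 1 :=
        Finset.card_insert_le _ _
      rw [Finset.card_singleton] at h1
      omega
    obtain ⟨γ, hγc, hγm, hγ0, hγ1, hγv⟩ := exists_pl3 x (stdVec i0) (stdVec j0) y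
      (faceSet s) (faceSet {i0, j0}) (faceSet t)
      (convex_convexHull ℝ _) (convex_convexHull ℝ _) (convex_convexHull ℝ _)
      (hS s ⟨i0, hi0⟩ hcs)
      (hS {i0, j0} ⟨i0, Finset.mem_insert_self _ _⟩ hcard2)
      (hS t ⟨j0, hj0⟩ hct)
      hxs hv1s hv1e hv2e hv2t hyt
    refine ⟨γ, hγc, hγm, hγ0, hγ1, le_trans hγv (ENNReal.ofReal_le_ofReal ?_)⟩
    have hb1 : dist x (stdVec i0) ≤ 3/2 :=
      hdle ⟨i0, hi0⟩ ⟨i0, Finset.mem_singleton_self i0⟩ hxs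
        (subset_convexHull ℝ _ (Set.mem_image_of_mem _
          (Finset.mem_coe.2 (Finset.mem_singleton_self i0))))
    have hb2 : dist (stdVec i0) (stdVec j0) ≤ 3/2 :=
      hdle ⟨i0, Finset.mem_singleton_self i0⟩ ⟨j0, Finset.mem_singleton_self j0⟩
        (subset_convexHull ℝ _ (Set.mem_image_of_mem _
          (Finset.mem_coe.2 (Finset.mem_singleton_self i0))))
        (subset_convexHull ℝ _ (Set.mem_image_of_mem _
          (Finset.mem_coe.2 (Finset.mem_singleton_self j0))))
    have hb3 : dist (stdVec j0) y ≤ 3/2 := by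
      rw [dist_comm]
      exact hdle ⟨j0, hj0⟩ ⟨j0, Finset.mem_singleton_self j0⟩ hyt
        (subset_convexHull ℝ _ (Set.mem_image_of_mem _
          (Finset.mem_coe.2 (Finset.mem_singleton_self j0))))
    rw [hεn]
    nlinarith [hNe, hb1, hb2, hb3]
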